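/- Let X be a stationary, irreducible, aperiodic Markov chain on a finite state space 𝒳 whose transition matrix P has all entries strictly positive, let g : 𝒳 → 𝒴 be a non-injective function, and let Y_t = g(X_t). Then the conditional entropy rate lim_{T→∞} (1/T) H(X_1^T | Y_1^T) is strictly positive. -/

import Mathlib

open Classical

/-- Finite-dimensional distributions of the Markov chain with initial distribution `μ`
and transition matrix `P`. -/
noncomputable def markovFD {α : Type*} [Fintype α] (μ : α → ℝ) (P : α → α → ℝ)
    (T : ℕ) (x : Fin T → α) : ℝ :=
  ∏ i : Fin T,
    if (i : ℕ) = 0 then μ (x i)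
    else P (x ⟨(i : ℕ) - 1, lt_of_le_of_lt (Nat.sub_le _ _) i.isLt⟩) (x i)

/-- Irreducibility of a transition matrix. -/
def MCIrreducible {α : Type*} [Fintype α] [DecidableEq α] (P : Matrix α α ℝ) : Prop :=
  ∀ i j, ∃ n : ℕ, 0 < n ∧ 0 < (P ^ n) i j

/-- Aperiodicity of a transition matrix. -/
def MCAperiodic {α : Type*} [Fintype α] [DecidableEq α] (P : Matrix α α ℝ) : Prop :=
  ∀ i, ∃ N : ℕ, ∀ n, N ≤ n → 0 < (P ^ n) i i

/-- Shannon conditional entropy `H(A | B)` of a joint PMF `J` on `A × B`. -/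
noncomputable def condEnt2 {A B : Type*} [Fintype A] [Fintype B] (J : A → B → ℝ) : ℝ :=
  -∑ a, ∑ b, J a b * Real.log (J a b / (∑ a', J a' b))

/-- Joint PMF of `(X_1^T, Y_1^T)` with `Y_t = g(X_t)`. -/
noncomputable def coarseJointMC {α γ : Type*} [Fintype α] [Fintype γ]
    (π : α → ℝ) (P : α → α → ℝ) (g : α → γ) (T : ℕ) :
    (Fin T → α) → (Fin T → γ) → ℝ :=
  fun x y => if ∀ i, y i = g (x i) then markovFD π P T x else 0

/-! ### Auxiliary lemmas -/

noncomputable def mfact {α : Type*} (μ : α → ℝ) (P : α → α → ℝ)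
    (T : ℕ) (x : Fin T → α) (i : Fin T) : ℝ :=
  if (i : ℕ) = 0 then μ (x i)
  else P (x ⟨(i : ℕ) - 1, lt_of_le_of_lt (Nat.sub_le _ _) i.isLt⟩) (x i)

lemma markovFD_eq_prod {α : Type*} [Fintype α] (μ : α → ℝ) (P : α → α → ℝ)
    (T : ℕ) (x : Fin T → α) : markovFD μ P T x = ∏ i, mfact μ P T x i := rfl

section bounds
variable {α : Type*} [Fintype α] [DecidableEq α] {μ : α → ℝ} {P : α → α → ℝ} {m M : ℝ}

omit [Fintype α] [DecidableEq α] in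
lemma mfact_le (hμ : ∀ i, μ i ≤ M) (hP : ∀ i j, P i j ≤ M)
    {T : ℕ} (x : Fin T → α) (i : Fin T) : mfact μ P T x i ≤ M := by
  unfold mfact; split <;> [exact hμ _; exact hP _ _]

omit [Fintype α] [DecidableEq α] in
lemma le_mfact (hμ : ∀ i, m ≤ μ i) (hP : ∀ i j, m ≤ P i j)
    {T : ℕ} (x : Fin T → α) (i : Fin T) : m ≤ mfact μ P T x i := by
  unfold mfact; split <;> [exact hμ _; exact hP _ _]

omit [DecidableEq α] in
lemma markovFD_pos (hm : 0 < m) (hμ : ∀ i, m ≤ μ i) (hP : ∀ i j, m ≤ P i j)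
    {T : ℕ} (x : Fin T → α) : 0 < markovFD μ P T x := by
  rw [markovFD_eq_prod]
  exact Finset.prod_pos fun i _ => lt_of_lt_of_le hm (le_mfact hμ hP x i)

/-- If `x'` agrees with `x` off `S`, the Markov weights are comparable. -/
lemma markovFD_compare (hm : 0 < m) (hmM : m ≤ M)
    (hμm : ∀ i, m ≤ μ i) (hPm : ∀ i j, m ≤ P i j)
    (hμM : ∀ i, μ i ≤ M) (hPM : ∀ i j, P i j ≤ M)
    {T : ℕ} (x x' : Fin T → α) (S : Finset (Fin T))
    (hagree : ∀ i, i ∉ S → x' i = x i) :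
    (m / M) ^ (2 * S.card) * markovFD μ P T x ≤ markovFD μ P T x' := by
  have hM : 0 < M := lt_of_lt_of_le hm hmM
  have hr0 : 0 ≤ m / M := div_nonneg hm.le hM.le
  have hr1 : m / M ≤ 1 := (div_le_one hM).2 hmM
  set f : Fin T → Fin T := fun t =>
    if h : (t : ℕ) + 1 < T then (⟨(t : ℕ) + 1, h⟩ : Fin T) else t with hf
  set B : Finset (Fin T) := S ∪ S.image f with hB
  have hBcard : B.card ≤ 2 * S.card := by
    calc B.card ≤ S.card + (S.image f).card := Finset.card_union_le _ _
    _ ≤ S.card + S.card := Nat.add_le_add_left Finset.card_image_le _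
    _ = 2 * S.card := by ring
  have hfac : ∀ i : Fin T, i ∉ B → mfact μ P T x' i = mfact μ P T x i := by
    intro i hi
    have hiS : i ∉ S := fun h => hi (Finset.mem_union_left _ h)
    have hx : x' i = x i := hagree i hiS
    unfold mfact
    split
    · rw [hx]
    · rename_i h0
      have hpred : x' ⟨(i : ℕ) - 1, lt_of_le_of_lt (Nat.sub_le _ _) i.isLt⟩
          = x ⟨(i : ℕ) - 1, lt_of_le_of_lt (Nat.sub_le _ _) i.isLt⟩ := by
        apply hagree
        intro hmem
        apply hi
        apply Finset.mem_union_right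
        refine Finset.mem_image.2 ⟨_, hmem, ?_⟩
        have h1 : (i : ℕ) - 1 + 1 = (i : ℕ) := Nat.succ_pred_eq_of_pos (Nat.pos_of_ne_zero h0)
        rw [hf]
        simp only []
        rw [dif_pos (by simpa [h1] using i.isLt)]
        exact Fin.ext (by simp [h1])
      rw [hx, hpred]
  have key : ∀ i : Fin T, (if i ∈ B then m / M else 1) * mfact μ P T x i ≤ mfact μ P T x' i := by
    intro i
    by_cases hi : i ∈ B
    · simp only [hi, if_true]
      calc m / M * mfact μ P T x i ≤ m / M * M := by
            have := mfact_le hμM hPM x i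
            nlinarith [le_mfact hμm hPm x i]
      _ = m * (M / M) := by ring
      _ = m := by rw [div_self hM.ne']; ring
      _ ≤ mfact μ P T x' i := le_mfact hμm hPm x' i
    · simp only [hi, if_false, one_mul, hfac i hi, le_refl]
  calc (m / M) ^ (2 * S.card) * markovFD μ P T x
      ≤ (m / M) ^ B.card * markovFD μ P T x := by
        apply mul_le_mul_of_nonneg_right (pow_le_pow_of_le_one hr0 hr1 hBcard)
        exact (markovFD_pos hm hμm hPm x).le
    _ = ∏ i, (if i ∈ B then m / M else 1) * mfact μ P T x i := by
        rw [Finset.prod_mul_distrib, markovFD_eq_prod]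
        congr 1
        rw [Finset.prod_ite_mem, Finset.univ_inter, Finset.prod_const]
    _ ≤ ∏ i, mfact μ P T x' i := by
        apply Finset.prod_le_prod
        · intro i _
          exact mul_nonneg (by positivity) (le_of_lt (lt_of_lt_of_le hm (le_mfact hμm hPm x i)))
        · intro i _; exact key i
    _ = markovFD μ P T x' := (markovFD_eq_prod _ _ _ _).symm

end bounds

section mass
variable {α : Type*} [Fintype α]

lemma markovFD_cons (μ : α → ℝ) (P : α → α → ℝ) {T : ℕ} (v : α) (x : Fin T → α) :
    markovFD μ P (T + 1) (Fin.cons v x) = μ v * markovFD (fun j => P v j) P T x := by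
  unfold markovFD
  rw [Fin.prod_univ_succ]
  congr 1
  apply Finset.prod_congr rfl
  intro i _
  have hsucc : ((i.succ : Fin (T+1)) : ℕ) = (i : ℕ) + 1 := rfl
  rw [if_neg (by rw [hsucc]; exact Nat.succ_ne_zero _)]
  rw [Fin.cons_succ]
  by_cases h0 : (i : ℕ) = 0
  · rw [if_pos h0]
    have h1 : (⟨((i.succ : Fin (T+1)) : ℕ) - 1,
        lt_of_le_of_lt (Nat.sub_le _ _) i.succ.isLt⟩ : Fin (T+1)) = (0 : Fin (T+1)) := by
      apply Fin.ext; simp [hsucc, h0]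
    rw [h1, Fin.cons_zero]
  · rw [if_neg h0]
    have h1 : (⟨((i.succ : Fin (T+1)) : ℕ) - 1,
        lt_of_le_of_lt (Nat.sub_le _ _) i.succ.isLt⟩ : Fin (T+1))
        = Fin.succ ⟨(i : ℕ) - 1, lt_of_le_of_lt (Nat.sub_le _ _) i.isLt⟩ := by
      apply Fin.ext
      simp [hsucc]
      omega
    rw [h1, Fin.cons_succ]

lemma markovFD_mass {P : α → α → ℝ} (hP1 : ∀ i, ∑ j, P i j = 1) :
    ∀ (T : ℕ) (μ : α → ℝ), (∑ i, μ i = 1) →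
      ∑ x : Fin T → α, markovFD μ P T x = 1 := by
  intro T
  induction T with
  | zero => intro μ hμ; simp [markovFD]
  | succ T ih =>
    intro μ hμ
    rw [← Equiv.sum_comp (Fin.consEquiv fun _ : Fin (T+1) => α) (markovFD μ P (T+1))]
    rw [Fintype.sum_prod_type]
    have key : ∀ v : α, ∑ x : Fin T → α,
        markovFD μ P (T+1) ((Fin.consEquiv fun _ : Fin (T+1) => α) (v, x)) = μ v := by
      intro v
      have he : ∀ x : Fin T → α,
          (Fin.consEquiv fun _ : Fin (T+1) => α) (v, x) = Fin.cons v x := fun x => rfl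
      simp_rw [he, markovFD_cons, ← Finset.mul_sum]
      rw [ih (fun j => P v j) (hP1 v), mul_one]
    simp_rw [key, hμ]

end mass

section marg
variable {α : Type*} [Fintype α] [DecidableEq α] {μ : α → ℝ} {P : α → α → ℝ} {m M : ℝ}

lemma marg_lower (hm : 0 < m) (hmM : m ≤ M)
    (hμm : ∀ i, m ≤ μ i) (hPm : ∀ i j, m ≤ P i j)
    (hμM : ∀ i, μ i ≤ M) (hPM : ∀ i j, P i j ≤ M)
    (hP1 : ∀ i, ∑ j, P i j = 1) (hμ1 : ∑ i, μ i = 1)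
    {T : ℕ} (t : Fin T) (a₀ : α) :
    (m / M) ^ 2 / (Fintype.card α : ℝ)
      ≤ ∑ x : Fin T → α, (if x t = a₀ then markovFD μ P T x else 0) := by
  have hM : 0 < M := lt_of_lt_of_le hm hmM
  have hcard : (0 : ℝ) < Fintype.card α := by
    have : Nonempty α := ⟨a₀⟩
    exact_mod_cast Fintype.card_pos
  set e := Equiv.funSplitAt t α with he
  set F := markovFD μ P T with hF
  have hsymm_at : ∀ (v : α) (w : {j : Fin T // j ≠ t} → α), e.symm (v, w) t = v := by
    intro v w
    simp [he, Equiv.funSplitAt, Equiv.piSplitAt]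
  have hupd : ∀ v w, Function.update (e.symm (v, w)) t a₀ = e.symm (a₀, w) := by
    intro v w
    funext j
    by_cases h : j = t
    · subst h; rw [Function.update_self, hsymm_at]
    · rw [Function.update_of_ne h]
      simp [he, Equiv.funSplitAt, Equiv.piSplitAt, h]
  have hcmp : ∀ v w, (m / M) ^ 2 * F (e.symm (v, w)) ≤ F (e.symm (a₀, w)) := by
    intro v w
    have h2 := markovFD_compare hm hmM hμm hPm hμM hPM (e.symm (v, w))
      (Function.update (e.symm (v, w)) t a₀) {t}
      (fun i hi => Function.update_of_ne (by simpa using hi) _ _)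
    rw [hupd] at h2
    simpa using h2
  have hmarg : ∑ x : Fin T → α, (if x t = a₀ then F x else 0)
      = ∑ w : {j : Fin T // j ≠ t} → α, F (e.symm (a₀, w)) := by
    rw [← Equiv.sum_comp e.symm (fun x => if x t = a₀ then F x else 0),
      Fintype.sum_prod_type]
    simp_rw [hsymm_at]
    have hsw : ∀ v : α, ∑ w : {j : Fin T // j ≠ t} → α,
        (if v = a₀ then F (e.symm (v, w)) else 0)
        = if v = a₀ then ∑ w : {j : Fin T // j ≠ t} → α, F (e.symm (a₀, w)) else 0 := by
      intro v
      by_cases h : v = a₀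
      · subst h; simp
      · simp [h]
    simp_rw [hsw]
    simp
  have hsum : ∑ v : α, ∑ w : {j : Fin T // j ≠ t} → α, F (e.symm (v, w)) = 1 := by
    have h1 := Equiv.sum_comp e.symm F
    rw [Fintype.sum_prod_type] at h1
    rw [h1]
    exact markovFD_mass hP1 T μ hμ1
  have hineq : (m / M) ^ 2
      ≤ (Fintype.card α : ℝ) * ∑ w : {j : Fin T // j ≠ t} → α, F (e.symm (a₀, w)) := by
    calc (m / M) ^ 2 = (m / M) ^ 2 * 1 := by ring
    _ = ∑ v : α, ∑ w : {j : Fin T // j ≠ t} → α, (m / M) ^ 2 * F (e.symm (v, w)) := by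
        rw [← hsum, Finset.mul_sum]; congr 1; funext v; rw [Finset.mul_sum]
    _ ≤ ∑ v : α, ∑ w : {j : Fin T // j ≠ t} → α, F (e.symm (a₀, w)) := by
        apply Finset.sum_le_sum; intro v _
        apply Finset.sum_le_sum; intro w _
        exact hcmp v w
    _ = (Fintype.card α : ℝ) * ∑ w : {j : Fin T // j ≠ t} → α, F (e.symm (a₀, w)) := by
        rw [Finset.sum_const, Finset.card_univ, nsmul_eq_mul]
  rw [hmarg]
  rw [div_le_iff₀ hcard] at *
  linarith [hineq]

end marg

section qlower
variable {α γ : Type*} [Fintype α] [DecidableEq α] {μ : α → ℝ} {P : α → α → ℝ} {m M : ℝ}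

lemma q_lower (hm : 0 < m) (hmM : m ≤ M)
    (hμm : ∀ i, m ≤ μ i) (hPm : ∀ i j, m ≤ P i j)
    (hμM : ∀ i, μ i ≤ M) (hPM : ∀ i j, P i j ≤ M)
    (g : α → γ) (a₀ b₀ : α) (hab : a₀ ≠ b₀) (hgab : g a₀ = g b₀)
    {T : ℕ} (x : Fin T → α) :
    (1 + (m / M) ^ 2) ^ ((Finset.univ.filter (fun t => x t = a₀ ∨ x t = b₀)).card)
        * markovFD μ P T x
      ≤ ∑ x' : Fin T → α, (if ∀ i, g (x i) = g (x' i) then markovFD μ P T x' else 0) := by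
  have hM : 0 < M := lt_of_lt_of_le hm hmM
  set r : ℝ := (m / M) ^ 2 with hr
  have hr0 : 0 ≤ r := by positivity
  set F := markovFD μ P T with hF
  have hFpos : ∀ z : Fin T → α, 0 < F z := fun z => markovFD_pos hm hμm hPm z
  set A : Finset (Fin T) := Finset.univ.filter (fun t => x t = a₀ ∨ x t = b₀) with hA
  set flip : Finset (Fin T) → (Fin T → α) :=
    fun S t => if t ∈ S then Equiv.swap a₀ b₀ (x t) else x t with hflip
  have hfiber : ∀ S ∈ A.powerset, ∀ i, g (x i) = g (flip S i) := by
    intro S hS i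
    simp only [hflip]
    by_cases hiS : i ∈ S
    · rw [if_pos hiS]
      have hiA : i ∈ A := Finset.mem_powerset.1 hS hiS
      rcases (Finset.mem_filter.1 hiA).2 with h | h
      · rw [h, Equiv.swap_apply_left, hgab]
      · rw [h, Equiv.swap_apply_right, hgab]
    · rw [if_neg hiS]
  have hinj : Set.InjOn flip A.powerset := by
    intro S hS S' hS' hEq
    ext t
    constructor
    · intro htS
      by_contra htS'
      have h1 : flip S t = Equiv.swap a₀ b₀ (x t) := if_pos htS
      have h2 : flip S' t = x t := if_neg htS'
      have hne : Equiv.swap a₀ b₀ (x t) ≠ x t := by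
        have hiA : t ∈ A := Finset.mem_powerset.1 hS htS
        rcases (Finset.mem_filter.1 hiA).2 with h | h
        · rw [h, Equiv.swap_apply_left]; exact fun hc => hab hc.symm
        · rw [h, Equiv.swap_apply_right]; exact hab
      exact hne (by rw [← h1, hEq, h2])
    · intro htS'
      by_contra htS
      have h1 : flip S' t = Equiv.swap a₀ b₀ (x t) := if_pos htS'
      have h2 : flip S t = x t := if_neg htS
      have hne : Equiv.swap a₀ b₀ (x t) ≠ x t := by
        have hiA : t ∈ A := Finset.mem_powerset.1 hS' htS'
        rcases (Finset.mem_filter.1 hiA).2 with h | h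
        · rw [h, Equiv.swap_apply_left]; exact fun hc => hab hc.symm
        · rw [h, Equiv.swap_apply_right]; exact hab
      exact hne (by rw [← h1, ← hEq, h2])
  have hcmp : ∀ S ∈ A.powerset, r ^ S.card * F x ≤ F (flip S) := by
    intro S _
    have h2 := markovFD_compare hm hmM hμm hPm hμM hPM x (flip S) S
      (fun i hi => if_neg hi)
    calc r ^ S.card * F x = (m / M) ^ (2 * S.card) * markovFD μ P T x := by
          rw [hr, ← pow_mul, hF]
    _ ≤ markovFD μ P T (flip S) := h2
    _ = F (flip S) := rfl
  calc (1 + r) ^ A.card * F x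
      = (∑ S ∈ A.powerset, r ^ S.card) * F x := by
        have := Finset.prod_add (fun _ : Fin T => r) (fun _ : Fin T => 1) A
        simp only [Finset.prod_const, one_pow, mul_one] at this
        rw [add_comm r 1] at this
        rw [this]
    _ = ∑ S ∈ A.powerset, r ^ S.card * F x := by rw [Finset.sum_mul]
    _ ≤ ∑ S ∈ A.powerset, F (flip S) := Finset.sum_le_sum hcmp
    _ = ∑ x' ∈ A.powerset.image flip, F x' :=
        (Finset.sum_image (fun a ha b hb h => hinj ha hb h)).symm
    _ ≤ ∑ x' ∈ Finset.univ.filter (fun x' => ∀ i, g (x i) = g (x' i)), F x' := by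
        apply Finset.sum_le_sum_of_subset_of_nonneg
        · intro x' hx'
          rcases Finset.mem_image.1 hx' with ⟨S, hS, rfl⟩
          exact Finset.mem_filter.2 ⟨Finset.mem_univ _, hfiber S hS⟩
        · intro z _ _; exact (hFpos z).le
    _ = ∑ x' : Fin T → α, (if ∀ i, g (x i) = g (x' i) then F x' else 0) := by
        rw [Finset.sum_filter]

end qlower

/-- If the transition matrix of a stationary irreducible aperiodic Markov
chain has all entries strictly positive and `g` is non-injective, then the information loss
rate `lim_T H(X_1^T | Y_1^T)/T` of the coarse graining `Y_t = g(X_t)` is strictly positive. -/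
theorem positive_matrix_noninjective_positive_loss_rate
    {α γ : Type*} [Fintype α] [DecidableEq α] [Fintype γ]
    (P : Matrix α α ℝ) (hP0 : ∀ i j, 0 < P i j) (hP1 : ∀ i, ∑ j, P i j = 1)
    (hirr : MCIrreducible P) (hap : MCAperiodic P)
    (π : α → ℝ) (hπ0 : ∀ i, 0 ≤ π i) (hπ1 : ∑ i, π i = 1)
    (hinv : ∀ j, ∑ i, π i * P i j = π j)
    (g : α → γ) (hg : ¬ Function.Injective g)
    (L : ℝ)
    (hL : Filter.Tendsto
      (fun T : ℕ => condEnt2 (coarseJointMC π (fun a b => P a b) g T) / T)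
      Filter.atTop (nhds L)) :
    0 < L := by
  obtain ⟨a₀, b₀, hgab, hab⟩ := Function.not_injective_iff.mp hg
  have hne : Nonempty α := ⟨a₀⟩
  have hcard : (0 : ℝ) < Fintype.card α := by exact_mod_cast Fintype.card_pos
  -- extremal entries of P
  obtain ⟨p0, -, hmin⟩ := Finset.exists_min_image Finset.univ
    (fun p : α × α => P p.1 p.2) ⟨(a₀, a₀), Finset.mem_univ _⟩
  obtain ⟨p1, -, hmax⟩ := Finset.exists_max_image Finset.univ
    (fun p : α × α => P p.1 p.2) ⟨(a₀, a₀), Finset.mem_univ _⟩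
  set m : ℝ := P p0.1 p0.2 with hmdef
  set M : ℝ := P p1.1 p1.2 with hMdef
  have hPm : ∀ i j, m ≤ P i j := fun i j => hmin (i, j) (Finset.mem_univ _)
  have hPM : ∀ i j, P i j ≤ M := fun i j => hmax (i, j) (Finset.mem_univ _)
  have hm : 0 < m := hP0 _ _
  have hmM : m ≤ M := hPM _ _
  have hM : 0 < M := lt_of_lt_of_le hm hmM
  have hπm : ∀ j, m ≤ π j := by
    intro j
    rw [← hinv j]
    calc m = ∑ i, π i * m := by rw [← Finset.sum_mul, hπ1, one_mul]
    _ ≤ ∑ i, π i * P i j :=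
        Finset.sum_le_sum fun i _ => mul_le_mul_of_nonneg_left (hPm i j) (hπ0 i)
  have hπM : ∀ j, π j ≤ M := by
    intro j
    rw [← hinv j]
    calc ∑ i, π i * P i j ≤ ∑ i, π i * M :=
        Finset.sum_le_sum fun i _ => mul_le_mul_of_nonneg_left (hPM i j) (hπ0 i)
    _ = M := by rw [← Finset.sum_mul, hπ1, one_mul]
  set r : ℝ := (m / M) ^ 2 with hrdef
  have hr0 : 0 < r := by positivity
  set c : ℝ := Real.log (1 + r) * (r / (Fintype.card α : ℝ)) with hcdef
  have hc : 0 < c := by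
    apply mul_pos (Real.log_pos (by linarith)) (div_pos hr0 hcard)
  -- the main estimate
  have main : ∀ T : ℕ, 1 ≤ T →
      c ≤ condEnt2 (coarseJointMC π (fun a b => P a b) g T) / T := by
    intro T hT
    have hTpos : (0 : ℝ) < T := by exact_mod_cast hT
    set F := markovFD π (fun a b => P a b) T with hFdef
    have hFpos : ∀ x : Fin T → α, 0 < F x := fun x => markovFD_pos hm hπm hPm x
    set Q : (Fin T → α) → ℝ :=
      fun x => ∑ x' : Fin T → α, (if ∀ i, g (x i) = g (x' i) then F x' else 0) with hQdef
    have hQterm : ∀ (x x' : Fin T → α),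
        0 ≤ (if ∀ i, g (x i) = g (x' i) then F x' else 0) := by
      intro x x'; split
      · exact (hFpos x').le
      · exact le_refl 0
    have hQge : ∀ x, F x ≤ Q x := by
      intro x
      have := Finset.single_le_sum
        (f := fun x' => if ∀ i, g (x i) = g (x' i) then F x' else 0)
        (fun x' _ => hQterm x x') (Finset.mem_univ x)
      simpa using this
    have hQpos : ∀ x, 0 < Q x := fun x => lt_of_lt_of_le (hFpos x) (hQge x)
    -- N x : number of sites in {a₀, b₀}
    set A : (Fin T → α) → Finset (Fin T) :=
      fun x => Finset.univ.filter (fun t => x t = a₀ ∨ x t = b₀) with hAdef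
    -- step A : simplify condEnt2
    have hinner : ∀ x : Fin T → α,
        (∑ y : Fin T → γ, coarseJointMC π (fun a b => P a b) g T x y *
          Real.log (coarseJointMC π (fun a b => P a b) g T x y /
            ∑ x', coarseJointMC π (fun a b => P a b) g T x' y))
        = F x * Real.log (F x / Q x) := by
      intro x
      rw [Finset.sum_eq_single (fun i => g (x i))]
      · have h1 : coarseJointMC π (fun a b => P a b) g T x (fun i => g (x i)) = F x :=
          if_pos (fun i => rfl)
        have h2 : (∑ x', coarseJointMC π (fun a b => P a b) g T x' (fun i => g (x i))) = Q x := rfl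
        rw [h1, h2]
      · intro y _ hy
        have h0 : coarseJointMC π (fun a b => P a b) g T x y = 0 := by
          rw [coarseJointMC, if_neg]
          intro hcon
          exact hy (funext hcon)
        rw [h0, zero_mul]
      · intro h; exact absurd (Finset.mem_univ _) h
    have hstepA : condEnt2 (coarseJointMC π (fun a b => P a b) g T)
        = ∑ x : Fin T → α, F x * Real.log (Q x / F x) := by
      rw [condEnt2]
      rw [Finset.sum_congr rfl (fun x _ => hinner x)]
      rw [← Finset.sum_neg_distrib]
      apply Finset.sum_congr rfl
      intro x _
      rw [Real.log_div (hFpos x).ne' (hQpos x).ne', Real.log_div (hQpos x).ne' (hFpos x).ne']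
      ring
    -- step C : pointwise lower bound
    have hstepC : ∀ x : Fin T → α,
        ((A x).card : ℝ) * Real.log (1 + r) * F x ≤ F x * Real.log (Q x / F x) := by
      intro x
      have hq := q_lower hm hmM hπm hPm hπM hPM g a₀ b₀ hab hgab x
      have hdiv : (1 + r) ^ (A x).card ≤ Q x / F x := by
        rw [le_div_iff₀ (hFpos x)]
        exact hq
      have hlog : ((A x).card : ℝ) * Real.log (1 + r) ≤ Real.log (Q x / F x) := by
        calc ((A x).card : ℝ) * Real.log (1 + r) = Real.log ((1 + r) ^ (A x).card) :=
            (Real.log_pow _ _).symm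
        _ ≤ Real.log (Q x / F x) := Real.log_le_log (by positivity) hdiv
      calc ((A x).card : ℝ) * Real.log (1 + r) * F x
          ≤ Real.log (Q x / F x) * F x :=
            mul_le_mul_of_nonneg_right hlog (hFpos x).le
      _ = F x * Real.log (Q x / F x) := by ring
    -- step D : sum the counts
    have hstepD : (T : ℝ) * (r / (Fintype.card α : ℝ))
        ≤ ∑ x : Fin T → α, ((A x).card : ℝ) * F x := by
      have hcount : ∀ x : Fin T → α,
          (∑ t : Fin T, (if x t = a₀ then F x else 0)) ≤ ((A x).card : ℝ) * F x := by
        intro x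
        have h1 : (Finset.univ.filter (fun t => x t = a₀)).card ≤ (A x).card := by
          rw [hAdef]
          apply Finset.card_le_card
          exact Finset.monotone_filter_right _ (fun t _ ht => Or.inl ht)
        calc (∑ t : Fin T, (if x t = a₀ then F x else 0))
            = ((Finset.univ.filter (fun t => x t = a₀)).card : ℝ) * F x := by
              rw [← Finset.sum_filter, Finset.sum_const, nsmul_eq_mul]
        _ ≤ ((A x).card : ℝ) * F x := by
              apply mul_le_mul_of_nonneg_right _ (hFpos x).le
              exact_mod_cast h1
      calc (T : ℝ) * (r / (Fintype.card α : ℝ))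
          = ∑ _t : Fin T, (r / (Fintype.card α : ℝ)) := by
            rw [Finset.sum_const, Finset.card_univ, Fintype.card_fin, nsmul_eq_mul]
      _ ≤ ∑ t : Fin T, ∑ x : Fin T → α, (if x t = a₀ then F x else 0) := by
            apply Finset.sum_le_sum
            intro t _
            exact marg_lower hm hmM hπm hPm hπM hPM hP1 hπ1 t a₀
      _ = ∑ x : Fin T → α, ∑ t : Fin T, (if x t = a₀ then F x else 0) := Finset.sum_comm
      _ ≤ ∑ x : Fin T → α, ((A x).card : ℝ) * F x :=
            Finset.sum_le_sum fun x _ => hcount x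
    -- combine
    have hfinal : c * T ≤ condEnt2 (coarseJointMC π (fun a b => P a b) g T) := by
      rw [hstepA]
      calc c * T = Real.log (1 + r) * ((T : ℝ) * (r / (Fintype.card α : ℝ))) := by
            rw [hcdef]; ring
      _ ≤ Real.log (1 + r) * ∑ x : Fin T → α, ((A x).card : ℝ) * F x := by
            apply mul_le_mul_of_nonneg_left hstepD (Real.log_nonneg (by linarith))
      _ = ∑ x : Fin T → α, ((A x).card : ℝ) * Real.log (1 + r) * F x := by
            rw [Finset.mul_sum]
            apply Finset.sum_congr rfl
            intro x _; ring
      _ ≤ ∑ x : Fin T → α, F x * Real.log (Q x / F x) :=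
            Finset.sum_le_sum fun x _ => hstepC x
    rw [le_div_iff₀ hTpos]
    linarith
  have hev : ∀ᶠ T : ℕ in Filter.atTop,
      c ≤ condEnt2 (coarseJointMC π (fun a b => P a b) g T) / T :=
    Filter.eventually_atTop.2 ⟨1, main⟩
  exact lt_of_lt_of_le hc (ge_of_tendsto hL hev)
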